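/- Let P ∈ S₊ⁿ (symmetric positive definite), A_cl ∈ ℝⁿˣⁿ, B_cl ∈ ℝⁿˣᵐ, Θ_Ψ ∈ S₊ᵐ, Θ_y ∈ S₊ᵖ, C ∈ ℝᵖˣⁿ, ρ > 0, 0 < η < 1. If the block matrix [[A_clᵀPA_cl - η²P + ρ²CᵀΘ_yC, A_clᵀPB_cl], [B_clᵀPA_cl, B_clᵀPB_cl - Θ_Ψ]] ⪯ 0, then for all Δx ∈ ℝⁿ and ΔΨ ∈ ℝᵐ with ΔΨᵀΘ_ΨΔΨ ≤ ρ²(CΔx)ᵀΘ_y(CΔx), one has (A_clΔx + B_clΔΨ)ᵀP(A_clΔx + B_clΔΨ) ≤ η² ΔxᵀPΔx. -/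

import Mathlib

open Matrix

theorem stmt9 {n m p : ℕ} (P Acl : Matrix (Fin n) (Fin n) ℝ) (Bcl : Matrix (Fin n) (Fin m) ℝ)
    (ΘΨ : Matrix (Fin m) (Fin m) ℝ) (Θy : Matrix (Fin p) (Fin p) ℝ) (C : Matrix (Fin p) (Fin n) ℝ)
    (ρ η : ℝ) (hρ : 0 < ρ) (hη0 : 0 < η) (hη1 : η < 1)
    (hP : P.PosDef) (hΘΨ : ΘΨ.PosDef) (hΘy : Θy.PosDef)
    (hLMI : (-(Matrix.fromBlocks
        (Aclᵀ * P * Acl - η ^ 2 • P + ρ ^ 2 • (Cᵀ * Θy * C)) (Aclᵀ * P * Bcl)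
        (Bclᵀ * P * Acl) (Bclᵀ * P * Bcl - ΘΨ))).PosSemidef) :
    ∀ (Δx : Fin n → ℝ) (ΔΨ : Fin m → ℝ),
      ΔΨ ⬝ᵥ ΘΨ.mulVec ΔΨ ≤ ρ ^ 2 * ((C.mulVec Δx) ⬝ᵥ Θy.mulVec (C.mulVec Δx)) →
      (Acl.mulVec Δx + Bcl.mulVec ΔΨ) ⬝ᵥ P.mulVec (Acl.mulVec Δx + Bcl.mulVec ΔΨ)
        ≤ η ^ 2 * (Δx ⬝ᵥ P.mulVec Δx) := by
  intro Δx ΔΨ hc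
  have h := hLMI.dotProduct_mulVec_nonneg (Sum.elim Δx ΔΨ)
  simp only [Matrix.neg_mulVec, Matrix.fromBlocks_mulVec, Matrix.sub_mulVec,
    Matrix.add_mulVec, Matrix.smul_mulVec, ← Matrix.mulVec_mulVec,
    Sum.elim_comp_inl, Sum.elim_comp_inr, star_trivial,
    dotProduct_neg, sumElim_dotProduct_sumElim, dotProduct_add,
    dotProduct_sub, dotProduct_smul, smul_eq_mul,
    Matrix.dotProduct_mulVec _ Aclᵀ, Matrix.dotProduct_mulVec _ Bclᵀ,
    Matrix.dotProduct_mulVec _ Cᵀ, Matrix.vecMul_transpose] at h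
  simp only [Matrix.mulVec_add, dotProduct_add, add_dotProduct] at *
  linarith
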